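/- Finite Ramsey theorem: for every triple (k, n, m) of natural numbers there exists a natural number R such that for every set S of size at least R and every coloring of the n-element subsets of S with k colors, there is a subset of S of size m all of whose n-element subsets receive the same color. -/

import Mathlib

open Finset

/-- Ramsey's theorem for `ℕ`. -/
theorem ramsey_nat (k n : ℕ) : ∀ m : ℕ, ∃ R : ℕ, ∀ S : Finset ℕ, R ≤ S.card →
    ∀ c : Finset ℕ → Fin k,
      ∃ T : Finset ℕ, T ⊆ S ∧ T.card = m ∧
        ∀ t₁ : Finset ℕ, t₁ ⊆ T → t₁.card = n →
          ∀ t₂ : Finset ℕ, t₂ ⊆ T → t₂.card = n → c t₁ = c t₂ := by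
  rcases Nat.eq_zero_or_pos k with hk | hk
  · subst hk
    exact fun m => ⟨0, fun S _ c => (c ∅).elim0⟩
  induction n with
  | zero =>
    intro m
    refine ⟨m, fun S hS c => ?_⟩
    obtain ⟨T, hT, hcard⟩ := Finset.exists_subset_card_eq (s := S) (n := m) hS
    refine ⟨T, hT, hcard, fun t₁ _ h1 t₂ _ h2 => ?_⟩
    rw [Finset.card_eq_zero.mp h1, Finset.card_eq_zero.mp h2]
  | succ n IH =>
    -- Inner claim: we can find a set of size `j` on which the color of any
    -- `(n+1)`-subset depends only on its minimum.
    have D : ∀ j : ℕ, ∃ R : ℕ, ∀ S : Finset ℕ, R ≤ S.card →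
        ∀ c : Finset ℕ → Fin k,
          ∃ T : Finset ℕ, T ⊆ S ∧ T.card = j ∧ ∃ κ : ℕ → Fin k,
            ∀ t : Finset ℕ, t ⊆ T → ∀ ht : t.card = n + 1,
              c t = κ (t.min' (Finset.card_pos.mp (by omega))) := by
      intro j
      induction j with
      | zero =>
        refine ⟨0, fun S _ c => ⟨∅, by simp, by simp, fun _ => ⟨0, hk⟩, ?_⟩⟩
        intro t ht hcard
        have : t = ∅ := Finset.subset_empty.mp ht
        subst this
        simp at hcard
      | succ j IHj =>
        obtain ⟨R₁, hR₁⟩ := IHj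
        obtain ⟨R₂, hR₂⟩ := IH (max R₁ n)
        refine ⟨R₂ + 1, fun S hS c => ?_⟩
        have hSne : S.Nonempty := Finset.card_pos.mp (by omega)
        set a := S.min' hSne with ha_def
        have ha : a ∈ S := S.min'_mem hSne
        have hcard' : R₂ ≤ (S.erase a).card := by
          rw [Finset.card_erase_of_mem ha]; omega
        obtain ⟨T', hT'sub, hT'card, hT'hom⟩ :=
          hR₂ (S.erase a) hcard' (fun s => c (insert a s))
        obtain ⟨T'', hT''sub, hT''card, κ', hκ'⟩ := hR₁ T' (by omega) c
        obtain ⟨s₀, hs₀sub, hs₀card⟩ :=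
          Finset.exists_subset_card_eq (s := T') (n := n) (by omega)
        have haT' : a ∉ T' := fun h => Finset.notMem_erase a S (hT'sub h)
        have haT'' : a ∉ T'' := fun h => haT' (hT''sub h)
        refine ⟨insert a T'', ?_, ?_, Function.update κ' a (c (insert a s₀)), ?_⟩
        · intro x hx
          rcases Finset.mem_insert.mp hx with rfl | hx
          · exact ha
          · exact Finset.mem_of_mem_erase (hT'sub (hT''sub hx))
        · rw [Finset.card_insert_of_notMem haT'', hT''card]
        · intro t htsub ht
          have htne : t.Nonempty := Finset.card_pos.mp (by omega)
          by_cases hat : a ∈ t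
          · -- minimum of t is a
            have hmin : t.min' htne = a := by
              refine le_antisymm (t.min'_le a hat) (Finset.le_min' _ _ _ fun x hx => ?_)
              have hxS : x ∈ S := by
                rcases Finset.mem_insert.mp (htsub hx) with rfl | h
                · exact ha
                · exact Finset.mem_of_mem_erase (hT'sub (hT''sub h))
              exact S.min'_le x hxS
            have herase : t.erase a ⊆ T' := by
              intro x hx
              have hxt := Finset.mem_of_mem_erase hx
              have hxa := Finset.ne_of_mem_erase hx
              rcases Finset.mem_insert.mp (htsub hxt) with rfl | h
              · exact absurd rfl hxa
              · exact hT''sub h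
            have hec : (t.erase a).card = n := by
              rw [Finset.card_erase_of_mem hat, ht]; omega
            have h1 : c t = c (insert a (t.erase a)) := by
              rw [Finset.insert_erase hat]
            rw [h1, hT'hom (t.erase a) herase hec s₀ hs₀sub hs₀card, hmin,
              Function.update_self]
          · -- t ⊆ T''
            have htT : t ⊆ T'' := by
              intro x hx
              rcases Finset.mem_insert.mp (htsub hx) with rfl | h
              · exact absurd hx hat
              · exact h
            have hmem : t.min' htne ∈ T'' := htT (t.min'_mem htne)
            have hne : t.min' htne ≠ a := fun h => haT'' (h ▸ hmem)
            rw [hκ' t htT ht, Function.update_of_ne hne]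
    -- Final assembly via pigeonhole
    intro m
    obtain ⟨R, hR⟩ := D (k * m + 1)
    refine ⟨R, fun S hS c => ?_⟩
    obtain ⟨T, hTsub, hTcard, κ, hκ⟩ := hR S hS c
    have hmaps : ∀ x ∈ T, κ x ∈ (Finset.univ : Finset (Fin k)) :=
      fun x _ => Finset.mem_univ _
    have hlt : (Finset.univ : Finset (Fin k)).card * m < T.card := by
      rw [Finset.card_univ, Fintype.card_fin, hTcard]; omega
    obtain ⟨q, _, hq⟩ :=
      Finset.exists_lt_card_fiber_of_mul_lt_card_of_maps_to hmaps hlt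
    obtain ⟨T₀, hT₀sub, hT₀card⟩ :=
      Finset.exists_subset_card_eq (n := m) hq.le
    have hT₀S : T₀ ⊆ S := fun x hx => hTsub (Finset.mem_of_mem_filter x (hT₀sub hx))
    refine ⟨T₀, hT₀S, hT₀card, ?_⟩
    intro t₁ h1 hc1 t₂ h2 hc2
    have hsubT : ∀ t : Finset ℕ, t ⊆ T₀ → t ⊆ T :=
      fun t h x hx => Finset.mem_of_mem_filter x (hT₀sub (h hx))
    have key : ∀ t : Finset ℕ, ∀ h : t ⊆ T₀, ∀ hc : t.card = n + 1, c t = q := by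
      intro t h hc
      have hne : t.Nonempty := Finset.card_pos.mp (by omega)
      have := hκ t (hsubT t h) hc
      rw [this]
      have : t.min' hne ∈ Finset.filter (fun x => κ x = q) T := hT₀sub (h (t.min'_mem hne))
      exact (Finset.mem_filter.mp this).2
    rw [key t₁ h1 hc1, key t₂ h2 hc2]

/-- **Finite Ramsey Theorem.** For every triple `(k, n, m)` of natural numbers there is
a number `R` such that whenever the `n`-element subsets of a set of size at least `R`
are painted in `k` colors, there is a subset of size `m` all of whose `n`-element
subsets receive the same color. -/
theorem finite_ramsey (k n m : ℕ) :
    ∃ R : ℕ, ∀ (α : Type) (S : Finset α), R ≤ S.card →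
      ∀ c : Finset α → Fin k,
        ∃ T : Finset α, T ⊆ S ∧ T.card = m ∧
          ∀ t₁ : Finset α, t₁ ⊆ T → t₁.card = n →
            ∀ t₂ : Finset α, t₂ ⊆ T → t₂.card = n → c t₁ = c t₂ := by
  obtain ⟨R, hR⟩ := ramsey_nat k n m
  refine ⟨R, fun α S hS c => ?_⟩
  -- transfer from ℕ to α via an equivalence S ≃ Fin S.card
  classical
  let e := S.equivFin
  by_cases hα : S.Nonempty
  swap
  · -- S empty, hence S.card = 0, R = 0... but we need T of card m; here m must be 0
    have h0 : S.card = 0 := by simpa [Finset.card_eq_zero, Finset.not_nonempty_iff_eq_empty.mp hα]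
    -- apply hR to range 0 is useless unless R = 0; here R ≤ S.card = 0.
    obtain ⟨T', hT'sub, hT'card, hhom⟩ := hR (Finset.range 0) (by simp; omega) (fun _ => c ∅)
    have : m = 0 := by
      have := Finset.card_le_card hT'sub
      simp [hT'card] at this; omega
    subst this
    refine ⟨∅, Finset.empty_subset _, Finset.card_empty, ?_⟩
    intro t₁ h1 hc1 t₂ h2 hc2
    rw [Finset.subset_empty.mp h1, Finset.subset_empty.mp h2]
  · obtain ⟨x₀, hx₀⟩ := hα
    -- h : ℕ → α mapping i < S.card to the corresponding element of S
    let h : ℕ → α := fun i => if hi : i < S.card then (e.symm ⟨i, hi⟩ : α) else x₀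
    have hmem : ∀ i, i < S.card → h i ∈ S := by
      intro i hi
      simp only [h, dif_pos hi]
      exact (e.symm ⟨i, hi⟩).2
    have hinj : Set.InjOn h (Finset.range S.card : Set ℕ) := by
      intro i hi j hj hij
      simp only [Finset.coe_range, Set.mem_Iio] at hi hj
      simp only [h, dif_pos hi, dif_pos hj] at hij
      have := e.symm.injective (Subtype.coe_injective hij)
      simpa using this
    let c' : Finset ℕ → Fin k := fun u => c (u.image h)
    obtain ⟨T', hT'sub, hT'card, hhom⟩ := hR (Finset.range S.card)
      (by simpa using hS) c'
    refine ⟨T'.image h, ?_, ?_, ?_⟩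
    · intro x hx
      obtain ⟨i, hi, rfl⟩ := Finset.mem_image.mp hx
      exact hmem i (Finset.mem_range.mp (hT'sub hi))
    · rw [Finset.card_image_of_injOn (hinj.mono (by exact_mod_cast hT'sub)), hT'card]
    · intro t₁ h1 hc1 t₂ h2 hc2
      -- pull back t₁, t₂ to subsets of T'
      have pull : ∀ t : Finset α, t ⊆ T'.image h → ∃ u : Finset ℕ,
          u ⊆ T' ∧ u.image h = t ∧ u.card = t.card := by
        intro t ht
        have himg : (T'.filter (fun i => h i ∈ t)).image h = t := by
          apply Finset.Subset.antisymm
          · intro x hx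
            obtain ⟨i, hi, rfl⟩ := Finset.mem_image.mp hx
            exact (Finset.mem_filter.mp hi).2
          · intro x hx
            obtain ⟨i, hi, rfl⟩ := Finset.mem_image.mp (ht hx)
            exact Finset.mem_image.mpr ⟨i, Finset.mem_filter.mpr ⟨hi, hx⟩, rfl⟩
        refine ⟨T'.filter (fun i => h i ∈ t), Finset.filter_subset (fun i => h i ∈ t) T', himg, ?_⟩
        have hinj' : Set.InjOn h ↑(T'.filter (fun i => h i ∈ t)) := by
          refine hinj.mono ?_
          intro i hi
          have h1 : i ∈ T'.filter (fun j => h j ∈ t) := hi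
          exact Finset.mem_coe.mpr (hT'sub (Finset.mem_of_mem_filter i h1))
        conv_rhs => rw [← himg]
        rw [Finset.card_image_of_injOn hinj']
      obtain ⟨u₁, hu₁sub, hu₁img, hu₁card⟩ := pull t₁ h1
      obtain ⟨u₂, hu₂sub, hu₂img, hu₂card⟩ := pull t₂ h2
      have := hhom u₁ hu₁sub (by omega) u₂ hu₂sub (by omega)
      simpa only [c', hu₁img, hu₂img] using this
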